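/- For every admissible tensor F on V: (a) if the associated Nijenhuis tensor N̂ of F vanishes identically, then N̂⁽²⁾, N̂⁽³⁾ and N̂⁽⁴⁾ all vanish identically; (b) if N̂⁽²⁾ vanishes identically or N̂⁽³⁾ vanishes identically, then N̂⁽⁴⁾ vanishes identically. -/
import Mathlib


open scoped RealInnerProductSpace

noncomputable section

/-- An almost paracontact almost paracomplex structure compatible with the inner
product on a real inner product space `V` of dimension `2 * n + 1`. -/
structure APAP (n : ℕ) (V : Type*) [NormedAddCommGroup V] [InnerProductSpace ℝ V] where
  phi : V →ₗ[ℝ] V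
  xi : V
  eta : V →ₗ[ℝ] ℝ
  dim_eq : Module.finrank ℝ V = 2 * n + 1
  phi_xi : phi xi = 0
  phi_phi : ∀ x : V, phi (phi x) = x - eta x • xi
  eta_phi : ∀ x : V, eta (phi x) = 0
  eta_xi : eta xi = 1
  trace_phi : LinearMap.trace ℝ V phi = 0
  compat : ∀ x y : V, ⟪phi x, phi y⟫ = ⟪x, y⟫ - eta x * eta y
  inner_xi : ∀ x : V, ⟪x, xi⟫ = eta x

variable {n : ℕ} {V : Type*} [NormedAddCommGroup V] [InnerProductSpace ℝ V]

/-- The defining symmetries of the fundamental tensor `F`. -/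
def APAP.Admissible (S : APAP n V) (F : V →ₗ[ℝ] V →ₗ[ℝ] V →ₗ[ℝ] ℝ) : Prop :=
  (∀ x y z : V, F x y z = F x z y) ∧
  (∀ x y z : V, F x y z =
    -F x (S.phi y) (S.phi z) + S.eta y * F x S.xi z + S.eta z * F x y S.xi)

/-- The Nijenhuis tensor of `F`. -/
def APAP.nij (S : APAP n V) (F : V →ₗ[ℝ] V →ₗ[ℝ] V →ₗ[ℝ] ℝ) (x y z : V) : ℝ :=
  F (S.phi x) y z - F (S.phi y) x z - F x y (S.phi z) + F y x (S.phi z)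
    + S.eta z * (F x (S.phi y) S.xi - F y (S.phi x) S.xi)

/-- The associated Nijenhuis tensor of `F`. -/
def APAP.nijA (S : APAP n V) (F : V →ₗ[ℝ] V →ₗ[ℝ] V →ₗ[ℝ] ℝ) (x y z : V) : ℝ :=
  F (S.phi x) y z + F (S.phi y) x z - F x y (S.phi z) - F y x (S.phi z)
    + S.eta z * (F x (S.phi y) S.xi + F y (S.phi x) S.xi)

/-- The tensor `N̂⁽²⁾` of `F`. -/
def APAP.nijA2 (S : APAP n V) (F : V →ₗ[ℝ] V →ₗ[ℝ] V →ₗ[ℝ] ℝ) (x y : V) : ℝ :=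
  -F x y S.xi - F y x S.xi - F (S.phi x) (S.phi y) S.xi - F (S.phi y) (S.phi x) S.xi

/-- The tensor `N̂⁽³⁾` of `F`. -/
def APAP.nijA3 (S : APAP n V) (F : V →ₗ[ℝ] V →ₗ[ℝ] V →ₗ[ℝ] ℝ) (x y : V) : ℝ :=
  F S.xi x y + F x y S.xi - F (S.phi x) (S.phi y) S.xi

/-- The tensor `N̂⁽⁴⁾` of `F`. -/
def APAP.nijA4 (S : APAP n V) (F : V →ₗ[ℝ] V →ₗ[ℝ] V →ₗ[ℝ] ℝ) (x : V) : ℝ :=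
  -F S.xi (S.phi x) S.xi

/-- vanishing of `N̂` implies vanishing of `N̂⁽²⁾`, `N̂⁽³⁾`, `N̂⁽⁴⁾`; and
vanishing of `N̂⁽²⁾` or `N̂⁽³⁾` implies vanishing of `N̂⁽⁴⁾`. -/
theorem statement8 (hn : 1 ≤ n) (S : APAP n V) (F : V →ₗ[ℝ] V →ₗ[ℝ] V →ₗ[ℝ] ℝ)
    (hF : S.Admissible F) :
    ((∀ x y z : V, S.nijA F x y z = 0) →
      ((∀ x y : V, S.nijA2 F x y = 0) ∧ (∀ x y : V, S.nijA3 F x y = 0) ∧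
        (∀ x : V, S.nijA4 F x = 0))) ∧
    (((∀ x y : V, S.nijA2 F x y = 0) ∨ (∀ x y : V, S.nijA3 F x y = 0)) →
      (∀ x : V, S.nijA4 F x = 0)) := by
  obtain ⟨hsym, hadm⟩ := hF
  -- F x ξ ξ = 0
  have h0 : ∀ x : V, F x S.xi S.xi = 0 := by
    intro x
    have := hadm x S.xi S.xi
    simp [S.phi_xi, S.eta_xi] at this
    linarith
  -- F u ξ ξ and friends with 0 arguments vanish; key computation:
  -- nijA F ξ y ξ = F ξ (φ y) ξ
  have hkey : ∀ y : V, S.nijA F S.xi y S.xi = F S.xi (S.phi y) S.xi := by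
    intro y
    simp [APAP.nijA, S.phi_xi, S.eta_xi, h0]
  -- Part b first: nijA2 F x ξ = - F ξ x ξ, nijA3 F x ξ = F ξ x ξ
  have h2xi : ∀ x : V, S.nijA2 F x S.xi = -F S.xi x S.xi := by
    intro x
    simp [APAP.nijA2, S.phi_xi, h0]
  have h3xi : ∀ x : V, S.nijA3 F x S.xi = F S.xi x S.xi := by
    intro x
    simp [APAP.nijA3, S.phi_xi, h0, hsym S.xi x S.xi]
  have hb : ((∀ x y : V, S.nijA2 F x y = 0) ∨ (∀ x y : V, S.nijA3 F x y = 0)) →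
      (∀ x : V, S.nijA4 F x = 0) := by
    rintro (h | h) x
    · have := h2xi (S.phi x); rw [h (S.phi x) S.xi] at this
      simp [APAP.nijA4]; linarith
    · have := h3xi (S.phi x); rw [h (S.phi x) S.xi] at this
      simp [APAP.nijA4]; linarith
  refine ⟨fun hN => ?_, hb⟩
  -- From nijA = 0: F ξ (φ y) ξ = 0 for all y
  have hphi0 : ∀ y : V, F S.xi (S.phi y) S.xi = 0 := by
    intro y; rw [← hkey y, hN]
  -- hence F ξ x ξ = 0 for all x
  have hA : ∀ x : V, F S.xi x S.xi = 0 := by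
    intro x
    have hx : x = S.phi (S.phi x) + S.eta x • S.xi := by
      rw [S.phi_phi x]; abel
    rw [hx]
    simp [hphi0, h0]
  have h4 : ∀ x : V, S.nijA4 F x = 0 := by
    intro x; simp [APAP.nijA4, hphi0]
  -- nijA2 x y = - nijA F x (φ y) ξ
  have h2 : ∀ x y : V, S.nijA2 F x y = 0 := by
    intro x y
    have hN' := hN x (S.phi y) S.xi
    simp only [APAP.nijA, S.phi_phi, S.phi_xi, S.eta_xi, map_sub, map_smul,
      LinearMap.sub_apply, LinearMap.smul_apply, smul_eq_mul, LinearMap.map_zero,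
      LinearMap.zero_apply] at hN'
    simp only [h0, hA] at hN'
    simp only [APAP.nijA2]
    linarith
  refine ⟨h2, fun x y => ?_, h4⟩
  -- nijA3 x y = nijA F ξ (φ x) y
  have hNxy := hN S.xi (S.phi x) y
  have hadm' := hadm S.xi x y
  simp only [hA, hsym S.xi x S.xi, mul_zero, add_zero] at hadm'
  -- hadm' : F ξ x y = -F ξ (φ x)(φ y) + η x * F ξ ξ y
  have hxixiy : F S.xi S.xi y = 0 := by rw [hsym S.xi S.xi y]; exact hA y
  simp only [APAP.nijA, S.phi_phi, S.phi_xi, S.eta_xi, map_sub, map_smul,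
    LinearMap.sub_apply, LinearMap.smul_apply, smul_eq_mul, LinearMap.map_zero,
    LinearMap.zero_apply] at hNxy
  simp only [h0, hA, hxixiy, hsym x S.xi y, hsym (S.phi x) S.xi (S.phi y)] at hNxy
  simp only [APAP.nijA3]
  rw [hxixiy, mul_zero, add_zero] at hadm'
  linarith
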